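/- Fix an integer t ≥ 2 and positive integers r_1, …, r_t. Let F be a forest (an acyclic simple graph with no isolated vertices) and let χ : E(F) → {1,…,t} be a proper edge-coloring of F (any two edges sharing a vertex receive different colors) such that for some color c ∈ {1,…,t}, every connected component of F contains an edge of color c. If |V(F)| ≥ max_i r_i + Σ_{i=1}^t (r_i − 1), then for some i ∈ {1,…,t}, F contains a matching of size r_i in color i. -/

import Mathlib

open SimpleGraph Walk Finset

/-- In an acyclic graph, `|V| ≤ |E| + #components`. -/
lemma acyclic_card_le_aux {V : Type*} [Fintype V] [DecidableEq V]
    (F : SimpleGraph V) (hacyclic : F.IsAcyclic) [Fintype F.edgeSet]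
    [Fintype F.ConnectedComponent] :
    Fintype.card V ≤ F.edgeFinset.card + Fintype.card F.ConnectedComponent := by
  classical
  set root : V → V := fun v => (F.connectedComponentMk v).out with hrootdef
  have hreach : ∀ v, F.Reachable v (root v) := by
    intro v
    have h1 : F.connectedComponentMk (root v) = F.connectedComponentMk v :=
      (F.connectedComponentMk v).out_eq
    exact (SimpleGraph.ConnectedComponent.eq.mp h1).symm
  have him : ∀ v, ∃ p : F.Walk v (root v), p.IsPath := fun v =>
    ⟨((hreach v).some.toPath : F.Path v (root v)).1,
     ((hreach v).some.toPath : F.Path v (root v)).2⟩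
  choose f hf using him
  have huniq : ∀ v (p : F.Walk v (root v)), p.IsPath → p = f v := fun v p hp =>
    Subtype.ext_iff.mp (hacyclic.path_unique ⟨p, hp⟩ ⟨f v, hf v⟩)
  classical
  set φ : V → Sym2 V ⊕ F.ConnectedComponent := fun v =>
    if h : v = root v then Sum.inr (F.connectedComponentMk v)
    else Sum.inl (((f v).firstDart (Walk.not_nil_of_ne h)).edge) with hφdef
  have hcard : Fintype.card V ≤
      (F.edgeFinset.disjSum (Finset.univ : Finset F.ConnectedComponent)).card := by
    rw [← Finset.card_univ]
    apply Finset.card_le_card_of_injOn φ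
    · intro v _
      by_cases h : v = root v
      · simp only [hφdef, dif_pos h]
        exact Finset.inr_mem_disjSum.mpr (Finset.mem_univ _)
      · simp only [hφdef, dif_neg h]
        exact Finset.inl_mem_disjSum.mpr (SimpleGraph.mem_edgeFinset.mpr (SimpleGraph.Dart.edge_mem _))
    · intro a _ b _ hab
      by_cases ha : a = root a <;> by_cases hb : b = root b
      · simp only [hφdef, dif_pos ha, dif_pos hb, Sum.inr.injEq] at hab
        calc a = root a := ha
        _ = root b := by rw [hrootdef]; exact congrArg _ hab
        _ = b := hb.symm
      · exact absurd hab (by simp [hφdef, dif_pos ha, dif_neg hb])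
      · exact absurd hab (by simp [hφdef, dif_neg ha, dif_pos hb])
      · simp only [hφdef, dif_neg ha, dif_neg hb, Sum.inl.injEq] at hab
        rw [SimpleGraph.dart_edge_eq_iff] at hab
        rcases hab with h | h
        · have hp := congrArg SimpleGraph.Dart.toProd h
          simp only [Walk.firstDart_toProd] at hp
          exact congrArg Prod.fst hp
        · -- reversed darts
          have hp := congrArg SimpleGraph.Dart.toProd h
          simp only [Walk.firstDart_toProd, SimpleGraph.Dart.symm_toProd,
            Prod.swap_prod_mk] at hp
          have h1 : (f a).getVert 1 = b := congrArg Prod.snd hp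
          have h2 : (f b).getVert 1 = a := (congrArg Prod.fst hp).symm
          have hadj : F.Adj a b := h1 ▸ (f a).adj_snd (Walk.not_nil_of_ne ha)
          have hrr : root a = root b := by
            rw [hrootdef]
            exact congrArg _ (SimpleGraph.ConnectedComponent.sound hadj.reachable)
          have w1 : F.Walk b (root b) := ((f a).tail.copy h1 hrr)
          have hw1 : (((f a).tail.copy h1 hrr) : F.Walk b (root b)).IsPath := by
            rw [Walk.isPath_copy]
            exact (hf a).tail
          have hw2 : (((f b).tail.copy h2 hrr.symm) : F.Walk a (root a)).IsPath := by
            rw [Walk.isPath_copy]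
            exact (hf b).tail
          have e1 := huniq b _ hw1
          have e2 := huniq a _ hw2
          have l1 := congrArg Walk.length e1
          have l2 := congrArg Walk.length e2
          rw [Walk.length_copy] at l1 l2
          have t1 := Walk.length_tail_add_one (p := f a) (Walk.not_nil_of_ne ha)
          have t2 := Walk.length_tail_add_one (p := f b) (Walk.not_nil_of_ne hb)
          omega
  rwa [Finset.card_disjSum, Finset.card_univ] at hcard

theorem good_forest_matching {V : Type*} [Fintype V] [DecidableEq V]
    (t : ℕ) (ht : 2 ≤ t) (r : Fin t → ℕ) (hr : ∀ i, 1 ≤ r i)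
    (F : SimpleGraph V) (hacyclic : F.IsAcyclic)
    (hnoiso : ∀ v : V, ∃ u : V, F.Adj v u)
    (χ : Sym2 V → Fin t)
    (hproper : ∀ e ∈ F.edgeSet, ∀ f ∈ F.edgeSet, e ≠ f →
      (∃ v : V, v ∈ e ∧ v ∈ f) → χ e ≠ χ f)
    (c : Fin t)
    (hc : ∀ v : V, ∃ a b : V, F.Adj a b ∧ F.Reachable v a ∧ χ s(a, b) = c)
    (hcard : Finset.univ.sup r + ∑ i, (r i - 1) ≤ Fintype.card V) :
    ∃ i : Fin t, ∃ M : Finset (Sym2 V), M.card = r i ∧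
      (∀ e ∈ M, e ∈ F.edgeSet ∧ χ e = i) ∧
      (∀ e ∈ M, ∀ f ∈ M, e ≠ f → ∀ v : V, v ∈ e → v ∉ f) := by
  classical
  haveI : Fintype F.ConnectedComponent := Fintype.ofFinite _
  set cc : Fin t → Finset (Sym2 V) := fun i => F.edgeFinset.filter (fun e => χ e = i) with hcc
  -- find a color with many edges
  have key : ∃ i, r i ≤ (cc i).card := by
    by_contra hcon
    push_neg at hcon
    have hE : F.edgeFinset.card = ∑ i, (cc i).card :=
      Finset.card_eq_sum_card_fiberwise (fun e _ => Finset.mem_univ (χ e))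
    have hsum : ∑ i, (cc i).card ≤ ∑ i, (r i - 1) :=
      Finset.sum_le_sum (fun i _ => by have := hcon i; omega)
    -- components inject into c-colored edges
    choose A B hAB hRe hχc using hc
    have hcomp : Fintype.card F.ConnectedComponent ≤ (cc c).card := by
      rw [← Finset.card_univ]
      apply Finset.card_le_card_of_injOn (fun C => s(A C.out, B C.out))
      · intro C _
        refine Finset.mem_filter.mpr ⟨SimpleGraph.mem_edgeFinset.mpr ?_, hχc _⟩
        exact (hAB C.out)
      · intro x _ y _ hxy
        simp only at hxy
        have hcompof : ∀ v : V, F.connectedComponentMk v = F.connectedComponentMk (A v) :=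
          fun v => SimpleGraph.ConnectedComponent.sound (hRe v)
        have hAy : F.connectedComponentMk (A x.out) = F.connectedComponentMk (A y.out) := by
          rw [Sym2.eq_iff] at hxy
          rcases hxy with ⟨h1, _⟩ | ⟨h1, h2⟩
          · rw [h1]
          · rw [h1]
            exact SimpleGraph.ConnectedComponent.sound (hAB y.out).symm.reachable
        calc x = F.connectedComponentMk x.out := x.out_eq.symm
          _ = F.connectedComponentMk (A x.out) := hcompof _
          _ = F.connectedComponentMk (A y.out) := hAy
          _ = F.connectedComponentMk y.out := (hcompof _).symm
          _ = y := y.out_eq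
    have hVle := acyclic_card_le_aux F hacyclic
    have hcc_c : (cc c).card ≤ r c - 1 := by have := hcon c; omega
    have hsup : r c ≤ Finset.univ.sup r := Finset.le_sup (Finset.mem_univ c)
    have hrc := hr c
    omega
  obtain ⟨i, hi⟩ := key
  obtain ⟨M, hMsub, hMcard⟩ := Finset.exists_subset_card_eq hi
  refine ⟨i, M, hMcard, ?_, ?_⟩
  · intro e he
    have := hMsub he
    rw [hcc, Finset.mem_filter, SimpleGraph.mem_edgeFinset] at this
    exact this
  · intro e he f hf hef v hve hvf
    have he' := hMsub he
    have hf' := hMsub hf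
    rw [hcc, Finset.mem_filter, SimpleGraph.mem_edgeFinset] at he' hf'
    exact hproper e he'.1 f hf'.1 hef ⟨v, hve, hvf⟩ (he'.2.trans hf'.2.symm)
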